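/- A commutative ring R is locally stable if and only if the formal power series ring R[[X]] is locally stable. -/

import Mathlib

/-- A commutative ring has stable range 1. -/
def HasStableRange1 (R : Type*) [CommRing R] : Prop :=
  ∀ a b : R, Ideal.span {a} ⊔ Ideal.span {b} = ⊤ → ∃ y : R, IsUnit (a + b * y)

/-- An element `a` is stable if `R/aR` has stable range 1. -/
def IsStableElem {R : Type*} [CommRing R] (a : R) : Prop :=
  HasStableRange1 (R ⧸ Ideal.span {a})

/-- A commutative ring is locally stable. -/
def LocallyStable (R : Type*) [CommRing R] : Prop :=
  ∀ a b : R, Ideal.span {a} ⊔ Ideal.span {b} = ⊤ →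
    ∃ y : R, HasStableRange1 (R ⧸ Ideal.span {a + b * y})

/-- A clean ring: every element is the sum of an idempotent and a unit. -/
def IsCleanRing (R : Type*) [CommRing R] : Prop :=
  ∀ a : R, ∃ e u : R, IsIdempotentElem e ∧ IsUnit u ∧ a = e + u

/-- A ring has neat range 1. -/
def NeatRange1 (R : Type*) [CommRing R] : Prop :=
  ∀ a b : R, Ideal.span {a} ⊔ Ideal.span {b} = ⊤ →
    ∃ y : R, IsCleanRing (R ⧸ Ideal.span {a + b * y})

/-- A ring has almost stable range 1: every proper homomorphic image has stable range 1. -/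
def AlmostStableRange1 (R : Type*) [CommRing R] : Prop :=
  ∀ I : Ideal R, I ≠ ⊥ → HasStableRange1 (R ⧸ I)

/-- An elementary divisor ring: every rectangular matrix admits diagonal reduction. -/
def ElementaryDivisorRing (R : Type*) [CommRing R] : Prop :=
  ∀ (m n : ℕ) (A : Matrix (Fin m) (Fin n) R),
    ∃ (P : Matrix (Fin m) (Fin m) R) (Q : Matrix (Fin n) (Fin n) R),
      IsUnit P ∧ IsUnit Q ∧
      (∀ (i : Fin m) (j : Fin n), (i : ℕ) ≠ (j : ℕ) → (P * A * Q) i j = 0) ∧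
      (∀ (i i' : Fin m) (j j' : Fin n), (i : ℕ) = (j : ℕ) → (i' : ℕ) = (j' : ℕ) →
        (i' : ℕ) = (i : ℕ) + 1 → (P * A * Q) i j ∣ (P * A * Q) i' j')

/-- A ring is strongly completable. -/
def StronglyCompletable (R : Type*) [CommRing R] : Prop :=
  ∀ (n : ℕ) (hn : 0 < n) (a : Fin n → R) (d : R),
    (⨆ i, Ideal.span {a i}) = Ideal.span {d} →
    ∃ A : Matrix (Fin n) (Fin n) R, (∀ j, A ⟨0, hn⟩ j = a j) ∧ A.det = d


/-- Spanning condition as a Bezout identity. -/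
lemma span_pair_top_iff {S : Type*} [CommRing S] (a b : S) :
    Ideal.span {a} ⊔ Ideal.span {b} = ⊤ ↔ ∃ r s : S, r * a + s * b = 1 := by
  rw [← Ideal.span_insert, Ideal.eq_top_iff_one, Ideal.mem_span_pair]

/-- Stable range 1 passes to surjective images. -/
lemma hasStableRange1_of_surjective {S T : Type*} [CommRing S] [CommRing T]
    (f : S →+* T) (hf : Function.Surjective f) (h : HasStableRange1 S) :
    HasStableRange1 T := by
  intro a b hab
  obtain ⟨r, s, hrs⟩ := (span_pair_top_iff a b).mp hab
  obtain ⟨a', ha⟩ := hf a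
  obtain ⟨b', hb⟩ := hf b
  obtain ⟨r', hr⟩ := hf r
  obtain ⟨s', hs⟩ := hf s
  set B : S := s' * b' + (1 - r' * a' - s' * b') with hB
  have hspan : Ideal.span {a'} ⊔ Ideal.span {B} = ⊤ := by
    rw [span_pair_top_iff]
    exact ⟨r', 1, by ring⟩
  obtain ⟨y, hy⟩ := h a' B hspan
  refine ⟨s * f y, ?_⟩
  have : f (a' + B * y) = a + b * (s * f y) := by
    have h0 : f (1 - r' * a' - s' * b') = 0 := by
      rw [map_sub, map_sub, map_one, map_mul, map_mul, ha, hb, hr, hs]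
      linear_combination -hrs
    simp only [hB, map_add, map_mul, ha, hb, hs, h0]
    ring
  exact this ▸ hy.map f

/-- Stable range 1 lifts along a surjection with kernel contained in the Jacobson radical. -/
lemma hasStableRange1_of_ker_le_jacobson {S T : Type*} [CommRing S] [CommRing T]
    (f : S →+* T) (hf : Function.Surjective f)
    (hker : RingHom.ker f ≤ Ideal.jacobson ⊥) (h : HasStableRange1 T) :
    HasStableRange1 S := by
  intro a b hab
  obtain ⟨r, s, hrs⟩ := (span_pair_top_iff a b).mp hab
  have hT : Ideal.span {f a} ⊔ Ideal.span {f b} = ⊤ := by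
    rw [span_pair_top_iff]
    exact ⟨f r, f s, by rw [← map_mul, ← map_mul, ← map_add, hrs, map_one]⟩
  obtain ⟨y', hy'⟩ := h (f a) (f b) hT
  obtain ⟨y, rfl⟩ := hf y'
  refine ⟨y, ?_⟩
  have hy : IsUnit (f (a + b * y)) := by simpa using hy'
  obtain ⟨u, hu⟩ := hy
  obtain ⟨v, hv⟩ := hf (↑u⁻¹ : T)
  have hmem : (a + b * y) * v - 1 ∈ RingHom.ker f := by
    simp only [RingHom.mem_ker, map_sub, map_mul, map_one, hv, ← hu]
    simp
  have hJ := hker hmem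
  have := Ideal.mem_jacobson_bot.mp hJ 1
  simp only [mul_one] at this
  have hunit : IsUnit ((a + b * y) * v) := by
    have : IsUnit ((a + b * y) * v - 1 + 1) := this
    simpa using this
  exact isUnit_of_mul_isUnit_left hunit

/-- Elements of the Jacobson radical map into the Jacobson radical of a quotient. -/
lemma mk_mem_jacobson_bot {S : Type*} [CommRing S] (I : Ideal S) {z : S}
    (hz : z ∈ Ideal.jacobson (⊥ : Ideal S)) :
    Ideal.Quotient.mk I z ∈ Ideal.jacobson (⊥ : Ideal (S ⧸ I)) := by
  rw [Ideal.mem_jacobson_bot]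
  intro w
  obtain ⟨w', rfl⟩ := Ideal.Quotient.mk_surjective w
  have := Ideal.mem_jacobson_bot.mp hz w'
  have := this.map (Ideal.Quotient.mk I)
  simpa using this

lemma constCoeff_zero_mem_jacobson {R : Type*} [CommRing R] {F : PowerSeries R}
    (hF : PowerSeries.constantCoeff (R := R) F = 0) :
    F ∈ Ideal.jacobson (⊥ : Ideal (PowerSeries R)) := by
  rw [Ideal.mem_jacobson_bot]
  intro G
  rw [PowerSeries.isUnit_iff_constantCoeff]
  simp [hF]

theorem stmt4 (R : Type*) [CommRing R] :
    LocallyStable R ↔ LocallyStable (PowerSeries R) := by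
  constructor
  · -- forward
    intro hR F G hFG
    set ev := PowerSeries.constantCoeff (R := R) with hev
    obtain ⟨r, s, hrs⟩ := (span_pair_top_iff F G).mp hFG
    have hab : Ideal.span {ev F} ⊔ Ideal.span {ev G} = ⊤ := by
      rw [span_pair_top_iff]
      exact ⟨ev r, ev s, by rw [← map_mul, ← map_mul, ← map_add, hrs, map_one]⟩
    obtain ⟨y₀, hy₀⟩ := hR (ev F) (ev G) hab
    refine ⟨PowerSeries.C (R := R) y₀, ?_⟩
    set H : PowerSeries R := F + G * PowerSeries.C (R := R) y₀ with hH
    set h₀ : R := ev F + ev G * y₀ with hh₀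
    have hevH : ev H = h₀ := by
      simp only [hH, hh₀, hev, map_add, map_mul, PowerSeries.constantCoeff_C]
    -- surjection ψ : R⟦X⟧/(H) → R/(h₀)
    have hle : Ideal.span {H} ≤
        Ideal.comap ev (Ideal.span {h₀}) := by
      rw [Ideal.span_le]
      intro x hx
      rw [Set.mem_singleton_iff] at hx
      subst hx
      show ev H ∈ Ideal.span {h₀}
      rw [hevH]
      exact Ideal.subset_span rfl
    set ψ := Ideal.quotientMap (Ideal.span {h₀}) ev hle with hψ
    have hsurj : Function.Surjective ψ := by
      intro t
      obtain ⟨t', rfl⟩ := Ideal.Quotient.mk_surjective t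
      obtain ⟨u, hu⟩ : ∃ u, ev u = t' :=
        ⟨PowerSeries.C (R := R) t', PowerSeries.constantCoeff_C t'⟩
      exact ⟨Ideal.Quotient.mk _ u, by rw [hψ, Ideal.quotientMap_mk, hu]⟩
    have hker : RingHom.ker ψ ≤ Ideal.jacobson ⊥ := by
      intro x hx
      obtain ⟨F', rfl⟩ := Ideal.Quotient.mk_surjective x
      rw [RingHom.mem_ker, hψ, Ideal.quotientMap_mk, Ideal.Quotient.eq_zero_iff_mem,
        Ideal.mem_span_singleton'] at hx
      obtain ⟨c, hc⟩ := hx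
      have hz : ev (F' - PowerSeries.C (R := R) c * H) = 0 := by
        rw [map_sub, map_mul, hevH]
        rw [show ev (PowerSeries.C (R := R) c) = c from PowerSeries.constantCoeff_C c]
        linear_combination -hc
      have hzJ := constCoeff_zero_mem_jacobson hz
      have := mk_mem_jacobson_bot (Ideal.span {H}) hzJ
      have heq : Ideal.Quotient.mk (Ideal.span {H}) (F' - PowerSeries.C (R := R) c * H) =
          Ideal.Quotient.mk (Ideal.span {H}) F' := by
        rw [Ideal.Quotient.mk_eq_mk_iff_sub_mem]
        have h1 : PowerSeries.C (R := R) c * H ∈ Ideal.span {H} :=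
          Ideal.mem_span_singleton'.mpr ⟨_, rfl⟩
        have h2 : F' - PowerSeries.C (R := R) c * H - F' = -(PowerSeries.C (R := R) c * H) := by ring
        rw [h2]
        exact neg_mem h1
      rwa [heq] at this
    exact hasStableRange1_of_ker_le_jacobson ψ hsurj hker hy₀
  · -- backward
    intro hP a b hab
    set C := PowerSeries.C (R := R) with hC
    obtain ⟨r, s, hrs⟩ := (span_pair_top_iff a b).mp hab
    have habP : Ideal.span {C a} ⊔ Ideal.span {C b} = ⊤ := by
      rw [span_pair_top_iff]
      exact ⟨C r, C s, by rw [← map_mul, ← map_mul, ← map_add, hrs, map_one]⟩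
    obtain ⟨Y, hY⟩ := hP (C a) (C b) habP
    set ev := PowerSeries.constantCoeff (R := R) with hev
    refine ⟨ev Y, ?_⟩
    set H : PowerSeries R := C a + C b * Y with hH
    set h₀ : R := a + b * ev Y with hh₀
    have hevH : ev H = h₀ := by
      simp only [hH, hh₀, hC, hev, map_add, map_mul, PowerSeries.constantCoeff_C]
    have hle : Ideal.span {H} ≤ Ideal.comap ev (Ideal.span {h₀}) := by
      rw [Ideal.span_le]
      intro x hx
      rw [Set.mem_singleton_iff] at hx
      subst hx
      show ev H ∈ Ideal.span {h₀}
      rw [hevH]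
      exact Ideal.subset_span rfl
    set ψ := Ideal.quotientMap (Ideal.span {h₀}) ev hle with hψ
    have hsurj : Function.Surjective ψ := by
      intro t
      obtain ⟨t', rfl⟩ := Ideal.Quotient.mk_surjective t
      refine ⟨Ideal.Quotient.mk _ (C t'), ?_⟩
      rw [hψ, Ideal.quotientMap_mk]
      simp only [hC, hev, PowerSeries.constantCoeff_C]
    exact hasStableRange1_of_surjective ψ hsurj hY
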